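/- Let R ∈ SO₃(ℝ) with −1 < trace(R) < 3, and set θ := arccos((trace(R) − 1)/2), so that 0 < θ < π. Then the skew-symmetric matrix X := (θ/(2 sin θ))·(R − Rᵀ) satisfies exp(X) = R (the matrix logarithm of a rotation of angle θ ≠ 0, π). -/

import Mathlib

open Matrix

noncomputable section

private lemma adj3 (A : Matrix (Fin 3) (Fin 3) ℝ) :
    adjugate A = A * A - (trace A) • A +
      (((trace A)^2 - trace (A * A))/2) • (1 : Matrix (Fin 3) (Fin 3) ℝ) := by
  ext i j
  fin_cases i <;> fin_cases j <;>
    simp [Matrix.adjugate_fin_three, Matrix.trace_fin_three, Matrix.mul_apply,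
      Fin.sum_univ_three, Matrix.one_apply] <;> ring

private lemma pow_cube {𝔸 : Type*} [Ring 𝔸] [Algebra ℝ 𝔸] (A : 𝔸) (θ : ℝ)
    (h : A * A * A = (-(θ^2)) • A) (k : ℕ) :
    A ^ (2*k+1) = ((-1:ℝ)^k * θ^(2*k)) • A ∧
    A ^ (2*k+2) = ((-1:ℝ)^k * θ^(2*k)) • (A * A) := by
  induction k with
  | zero => constructor <;> simp [pow_succ]
  | succ k ih =>
    obtain ⟨h1, h2⟩ := ih
    have e1 : 2*(k+1)+1 = (2*k+2)+1 := by ring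
    have e2 : 2*(k+1)+2 = (2*(k+1)+1)+1 := by ring
    have hodd : A ^ (2*(k+1)+1) = ((-1:ℝ)^(k+1) * θ^(2*(k+1))) • A := by
      rw [e1, pow_succ, h2, smul_mul_assoc, mul_assoc, ← mul_assoc A A A, h, smul_smul]
      congr 1
      ring
    refine ⟨hodd, ?_⟩
    rw [e2, pow_succ, hodd, smul_mul_assoc]

private lemma exp_cube' {𝔸 : Type*} [NormedRing 𝔸] [NormedAlgebra ℝ 𝔸] [CompleteSpace 𝔸]
    (A : 𝔸) (θ : ℝ) (hθ : θ ≠ 0)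
    (h : A * A * A = (-(θ^2)) • A) :
    NormedSpace.exp A =
      1 + (Real.sin θ / θ) • A + ((1 - Real.cos θ)/θ^2) • (A * A) := by
  set f : ℕ → 𝔸 := fun n => ((Nat.factorial n : ℝ))⁻¹ • A ^ n with hf
  have hsin : HasSum (fun k : ℕ => ((-1:ℝ)^k * θ^(2*k+1) / Nat.factorial (2*k+1)) / θ)
      (Real.sin θ / θ) := (Real.hasSum_sin θ).div_const θ
  have keyO : (fun k : ℕ => f (2*k+1)) =
      fun k : ℕ => (((-1:ℝ)^k * θ^(2*k+1) / Nat.factorial (2*k+1)) / θ) • A := by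
    funext k
    simp only [hf]
    rw [(pow_cube A θ h k).1, smul_smul]
    congr 1
    rw [pow_succ]
    field_simp
  have hO : HasSum (fun k : ℕ => f (2*k+1)) ((Real.sin θ / θ) • A) := by
    rw [keyO]; exact hsin.smul_const A
  have hcos1 : HasSum (fun k : ℕ => (-1:ℝ)^(k+1) * θ^(2*(k+1)) / Nat.factorial (2*(k+1)))
      (Real.cos θ - 1) := by
    refine (hasSum_nat_add_iff (f := fun n : ℕ => (-1:ℝ)^n * θ^(2*n) / Nat.factorial (2*n)) 1).mpr ?_
    convert Real.hasSum_cos θ using 1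
    · rfl
    simp
  have hcos2 : HasSum (fun k : ℕ => ((-1:ℝ)^(k+1) * θ^(2*(k+1)) / Nat.factorial (2*(k+1))) / (-(θ^2)))
      ((1 - Real.cos θ) / θ^2) := by
    have := hcos1.div_const (-(θ^2))
    convert this using 1
    · rfl
    field_simp
    ring
  have keyE : (fun k : ℕ => f (2*(k+1))) =
      fun k : ℕ => (((-1:ℝ)^(k+1) * θ^(2*(k+1)) / Nat.factorial (2*(k+1))) / (-(θ^2))) • (A * A) := by
    funext k
    simp only [hf]
    have e : 2*(k+1) = 2*k+2 := by ring
    rw [e, (pow_cube A θ h k).2, smul_smul]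
    congr 1
    rw [pow_succ, pow_succ]
    field_simp
    ring
  have hE2 : HasSum (fun k : ℕ => f (2*(k+1))) (((1 - Real.cos θ)/θ^2) • (A * A)) := by
    rw [keyE]; exact hcos2.smul_const (A * A)
  have hE : HasSum (fun k : ℕ => f (2*k)) (1 + ((1 - Real.cos θ)/θ^2) • (A * A)) := by
    have h' := (hasSum_nat_add_iff (f := fun k : ℕ => f (2*k)) 1).mp hE2
    convert h' using 1
    · rfl
    simp [hf, add_comm]
  have htot : HasSum f ((1 + ((1 - Real.cos θ)/θ^2) • (A * A)) + (Real.sin θ / θ) • A) :=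
    hE.even_add_odd hO
  rw [NormedSpace.exp_eq_tsum (𝕂 := ℝ)]
  show (∑' n : ℕ, ((Nat.factorial n : ℝ))⁻¹ • A ^ n) = _
  rw [htot.tsum_eq]
  abel

private lemma exp_cube (A : Matrix (Fin 3) (Fin 3) ℝ) (θ : ℝ) (hθ : θ ≠ 0)
    (h : A * A * A = (-(θ^2)) • A) :
    NormedSpace.exp A =
      1 + (Real.sin θ / θ) • A + ((1 - Real.cos θ)/θ^2) • (A * A) := by
  letI : SeminormedRing (Matrix (Fin 3) (Fin 3) ℝ) := Matrix.linftyOpSemiNormedRing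
  letI : NormedRing (Matrix (Fin 3) (Fin 3) ℝ) := Matrix.linftyOpNormedRing
  letI : NormedAlgebra ℝ (Matrix (Fin 3) (Fin 3) ℝ) := Matrix.linftyOpNormedAlgebra
  exact exp_cube' A θ hθ h

/-- If `R ∈ SO₃(ℝ)` with `−1 < trace R < 3` and
`θ := arccos((trace R − 1)/2)`, then `0 < θ < π` and the skew-symmetric matrix
`X := (θ/(2 sin θ))·(R − Rᵀ)` satisfies `exp(X) = R`. -/
theorem stmt13 (R : Matrix (Fin 3) (Fin 3) ℝ)
    (hR : R ∈ Matrix.specialOrthogonalGroup (Fin 3) ℝ)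
    (h1 : -1 < Matrix.trace R) (h3 : Matrix.trace R < 3) :
    0 < Real.arccos ((Matrix.trace R - 1) / 2) ∧
    Real.arccos ((Matrix.trace R - 1) / 2) < Real.pi ∧
    NormedSpace.exp
        ((Real.arccos ((Matrix.trace R - 1) / 2) /
            (2 * Real.sin (Real.arccos ((Matrix.trace R - 1) / 2)))) • (R - Rᵀ))
      = R := by
  set t := Matrix.trace R with ht
  set θ := Real.arccos ((t - 1) / 2) with hθdef
  -- basic bounds
  have hle : -1 ≤ (t - 1) / 2 := by linarith
  have hlt1 : (t - 1) / 2 < 1 := by linarith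
  have hθpos : 0 < θ := Real.arccos_pos.mpr hlt1
  have hcos : Real.cos θ = (t - 1) / 2 := Real.cos_arccos hle hlt1.le
  have hθltpi : θ < Real.pi := by
    refine lt_of_le_of_ne (Real.arccos_le_pi _) (fun heq => ?_)
    rw [heq, Real.cos_pi] at hcos
    linarith
  have hθne : θ ≠ 0 := ne_of_gt hθpos
  have hsinpos : 0 < Real.sin θ := Real.sin_pos_of_pos_of_lt_pi hθpos hθltpi
  have hsne : Real.sin θ ≠ 0 := ne_of_gt hsinpos
  have hsin2 : Real.sin θ ^ 2 = 1 - ((t - 1) / 2) ^ 2 := by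
    rw [Real.sin_sq, hcos]
  -- group facts
  obtain ⟨ho, hdet⟩ := Matrix.mem_specialOrthogonalGroup_iff.mp hR
  have hstar : star R = Rᵀ := by ext i j; simp [Matrix.star_apply]
  have hRRT : R * Rᵀ = 1 := by
    have := Matrix.mem_unitaryGroup_iff.mp ho
    rwa [hstar] at this
  have hRTR : Rᵀ * R = 1 := by
    have := Matrix.mem_unitaryGroup_iff'.mp ho
    rwa [hstar] at this
  have hadj : adjugate R = Rᵀ := by
    have h3' := Matrix.mul_adjugate R
    rw [hdet, one_smul] at h3'
    calc adjugate R = 1 * adjugate R := (one_mul _).symm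
      _ = Rᵀ * R * adjugate R := by rw [hRTR]
      _ = Rᵀ * (R * adjugate R) := by rw [mul_assoc]
      _ = Rᵀ := by rw [h3', mul_one]
  -- Cayley–Hamilton style identities
  have h0 := adj3 R
  rw [hadj, ← ht] at h0
  have htr := congrArg Matrix.trace h0
  simp only [Matrix.trace_add, Matrix.trace_sub, Matrix.trace_smul, Matrix.trace_one,
    Matrix.trace_transpose, smul_eq_mul, Fintype.card_fin, ← ht] at htr
  have he : (t^2 - Matrix.trace (R * R))/2 = t := by
    push_cast at htr
    nlinarith [htr]
  rw [he] at h0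
  have hRR : R * R = Rᵀ + t • R - t • 1 := by rw [h0]; abel
  have hTT : Rᵀ * Rᵀ = R + t • Rᵀ - t • 1 := by
    have h4 := congrArg Matrix.transpose h0
    simp only [Matrix.transpose_transpose, Matrix.transpose_add, Matrix.transpose_sub,
      Matrix.transpose_smul, Matrix.transpose_mul, Matrix.transpose_one] at h4
    generalize hB : Rᵀ * Rᵀ = B at h4 ⊢
    generalize hC : Rᵀ = C at h4 ⊢
    rw [h4]; abel
  -- powers of S = R - Rᵀ
  have hS2 : (R - Rᵀ) * (R - Rᵀ) = (t+1) • (R + Rᵀ) - (2*(t+1)) • 1 := by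
    rw [sub_mul, mul_sub, mul_sub, hRR, hTT, hRRT, hRTR]
    module
  have hS3 : (R - Rᵀ) * (R - Rᵀ) * (R - Rᵀ) = ((t+1)*(t-3)) • (R - Rᵀ) := by
    rw [hS2, sub_mul, smul_mul_assoc, smul_mul_assoc, one_mul, add_mul, mul_sub, mul_sub,
      hRR, hTT, hRRT, hRTR]
    module
  -- the skew matrix X
  set μ : ℝ := θ / (2 * Real.sin θ) with hμ
  set X : Matrix (Fin 3) (Fin 3) ℝ := μ • (R - Rᵀ) with hX
  have hXX : X * X = (μ * μ) • ((R - Rᵀ) * (R - Rᵀ)) := by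
    rw [hX, smul_mul_assoc, mul_smul_comm, smul_smul]
  have hfour : (2 * Real.sin θ)^2 = (3 - t) * (t + 1) := by
    have : (2 * Real.sin θ)^2 = 4 * Real.sin θ ^ 2 := by ring
    rw [this, hsin2]; ring
  have hprod : 0 < (3 - t) * (t + 1) := by nlinarith
  have hμ2 : μ^2 * ((3 - t) * (t + 1)) = θ^2 := by
    rw [hμ, div_pow, hfour, div_mul_cancel₀ _ (ne_of_gt hprod)]
  have hXcube : X * X * X = (-(θ^2)) • X := by
    rw [hXX, smul_mul_assoc, hX, mul_smul_comm, hS3, smul_smul, smul_smul, smul_smul]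
    congr 1
    linear_combination (-μ) * hμ2
  have hexp := exp_cube X θ hθne hXcube
  refine ⟨hθpos, hθltpi, ?_⟩
  show NormedSpace.exp X = R
  rw [hexp, hXX, hS2, hX, hcos, hμ]
  have ht1 : t + 1 ≠ 0 := by linarith
  match_scalars
  · field_simp
    linear_combination hfour
  · field_simp
    linear_combination (-1) * hfour
  · field_simp
    linear_combination (-1) * hfour
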